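/- For n ≥ 1, the trace distance between the ciphertext states of the two one-bit messages in the conjugate-coding public-key scheme is at most (√2/2)^n: D(ρ₀, ρ₁) ≤ (1/√2)^n. -/

import Mathlib

open Matrix Finset ComplexOrder

/-- Parity of a bit string. -/
def parity {n : ℕ} (ν : Fin n → ZMod 2) : ZMod 2 := ∑ l, ν l

/-- Tensor product of a family of one-qubit matrices, as a matrix indexed by bit strings. -/
def tens {n : ℕ} (A : Fin n → Matrix (ZMod 2) (ZMod 2) ℂ) :
    Matrix (Fin n → ZMod 2) (Fin n → ZMod 2) ℂ :=
  Matrix.of fun x y => ∏ l, A l (x l) (y l)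

/-- The four conjugate-coding states `ψ_{ij} = H^j X^i |0⟩`. -/
noncomputable def psi (i j : ZMod 2) : ZMod 2 → ℂ :=
  if j = 0 then (if i = 0 then ![1, 0] else ![0, 1])
  else if i = 0 then (1 / Real.sqrt 2 : ℝ) • ![1, 1]
  else (1 / Real.sqrt 2 : ℝ) • ![1, -1]

/-- The rank-one projector `|ψ_{ij}⟩⟨ψ_{ij}|`. -/
noncomputable def projQ (i j : ZMod 2) : Matrix (ZMod 2) (ZMod 2) ℂ :=
  Matrix.vecMulVec (psi i j) (star (psi i j))

/-- The ciphertext state `ρ_b` of the one-bit message `b`. -/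
noncomputable def rho (n : ℕ) (b : ZMod 2) :
    Matrix (Fin n → ZMod 2) (Fin n → ZMod 2) ℂ :=
  (1 / 2 ^ (2 * n - 1) : ℂ) •
    ∑ i ∈ Finset.univ.filter (fun i : Fin n → ZMod 2 => parity i = b),
      ∑ j : Fin n → ZMod 2, tens (fun l => projQ (i l) (j l))

/-- `|A|` is the positive semidefinite square root of `AᴴA`. -/
noncomputable def matAbs {m : Type*} [Fintype m] [DecidableEq m] (A : Matrix m m ℂ) :
    Matrix m m ℂ :=
  (Matrix.posSemidef_conjTranspose_mul_self A).1.eigenvectorUnitary.1 *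
    diagonal ((↑) ∘ (√·) ∘ (Matrix.posSemidef_conjTranspose_mul_self A).1.eigenvalues) *
    (star (Matrix.posSemidef_conjTranspose_mul_self A).1.eigenvectorUnitary : Matrix m m ℂ)

/-- The trace norm `‖A‖_tr = tr |A|` (a real number). -/
noncomputable def traceNorm {m : Type*} [Fintype m] [DecidableEq m] (A : Matrix m m ℂ) : ℝ :=
  (matAbs A).trace.re

/-! ### Auxiliary material -/

noncomputable def chi (w : ZMod 2) : ℂ := if w = 0 then 1 else -1

def K0 : Matrix (ZMod 2) (ZMod 2) ℂ := !![1,1;1,-1]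

lemma zmod2_sum {M : Type*} [AddCommMonoid M] (f : ZMod 2 → M) : ∑ w, f w = f 0 + f 1 :=
  Fin.sum_univ_two f

lemma zmod2_cases (x : ZMod 2) : x = 0 ∨ x = 1 := by revert x; decide

lemma vec2_zero {α : Type*} (a b : α) : @Matrix.vecCons α 1 a ![b] (0 : ZMod 2) = a := rfl

lemma vec2_one {α : Type*} (a b : α) : @Matrix.vecCons α 1 a ![b] (1 : ZMod 2) = b := rfl

lemma psi_apply (i j x : ZMod 2) : psi i j x =
    if j = 0 then (if i = 0 then (![1, 0] : ZMod 2 → ℂ) x else (![0, 1] : ZMod 2 → ℂ) x)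
    else if i = 0 then (1 / Real.sqrt 2 : ℝ) • (![1, 1] : ZMod 2 → ℂ) x
    else (1 / Real.sqrt 2 : ℝ) • (![1, -1] : ZMod 2 → ℂ) x := by
  rcases zmod2_cases i with rfl | rfl <;> rcases zmod2_cases j with rfl | rfl <;> rfl

lemma of_z (f : Fin 2 → Fin 2 → ℂ) (i j : ZMod 2) : Matrix.of f i j = f i j := rfl

lemma key_entry (a b : ZMod 2) :
    ∑ w : ZMod 2, chi w * (∑ j : ZMod 2, projQ w j a b) = K0 a b := by
  have hs : Real.sqrt 2 * Real.sqrt 2 = 2 := Real.mul_self_sqrt (by norm_num)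
  rcases zmod2_cases a with rfl | rfl <;> rcases zmod2_cases b with rfl | rfl <;>
    simp [zmod2_sum, chi, projQ, psi_apply, vecMulVec_apply, K0, Pi.smul_apply,
      Complex.ofReal_div, one_ne_zero, of_z, vec2_zero, vec2_one] <;>
    · field_simp
      norm_num [← Complex.ofReal_mul, hs, ← Complex.ofReal_pow, Real.sq_sqrt]

lemma chi_add (a b : ZMod 2) : chi (a + b) = chi a * chi b := by
  rcases zmod2_cases a with rfl | rfl <;> rcases zmod2_cases b with rfl | rfl <;>
    simp [chi, one_ne_zero, show (1 + 1 : ZMod 2) = 0 from rfl]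

lemma chi_parity {n : ℕ} (ν : Fin n → ZMod 2) : chi (parity ν) = ∏ l, chi (ν l) := by
  unfold parity
  induction (Finset.univ : Finset (Fin n)) using Finset.cons_induction with
  | empty => simp [chi]
  | cons a s ha ih => rw [Finset.sum_cons, Finset.prod_cons, chi_add, ih]

lemma sum_prod_eq {n : ℕ} (f : Fin n → ZMod 2 → ℂ) :
    ∑ g : Fin n → ZMod 2, ∏ l, f l (g l) = ∏ l, ∑ w, f l w := by
  rw [Finset.prod_univ_sum]
  simp [Fintype.piFinset_univ]

lemma tens_mul {n : ℕ} (A B : Fin n → Matrix (ZMod 2) (ZMod 2) ℂ) :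
    tens A * tens B = tens (fun l => A l * B l) := by
  ext x y
  simp only [tens, mul_apply, of_apply, ← Finset.prod_mul_distrib]
  rw [sum_prod_eq (fun l w => A l (x l) w * B l w (y l))]

lemma tens_conjTranspose {n : ℕ} (A : Fin n → Matrix (ZMod 2) (ZMod 2) ℂ) :
    (tens A)ᴴ = tens (fun l => (A l)ᴴ) := by
  ext x y
  simp [tens, conjTranspose_apply, map_prod]

lemma tens_smul_one {n : ℕ} (a : ℂ) :
    tens (fun _ : Fin n => a • (1 : Matrix (ZMod 2) (ZMod 2) ℂ)) = a ^ n • 1 := by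
  ext x y
  simp only [tens, of_apply, Matrix.smul_apply, Matrix.one_apply, smul_eq_mul,
    Finset.prod_mul_distrib, Finset.prod_const, Finset.card_univ, Fintype.card_fin]
  by_cases h : x = y
  · subst h; simp
  · obtain ⟨l, hl⟩ := Function.ne_iff.mp h
    rw [Finset.prod_eq_zero (Finset.mem_univ l) (by simp [hl]), if_neg h]

lemma K0_herm : K0ᴴ = K0 := by
  ext a b
  rw [conjTranspose_apply]
  fin_cases a <;> fin_cases b <;> simp [K0]

set_option maxHeartbeats 1000000 in
lemma K0_sq : K0 * K0 = (2 : ℂ) • 1 := by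
  ext a b
  rw [mul_apply, zmod2_sum]
  rcases zmod2_cases a with rfl | rfl <;> rcases zmod2_cases b with rfl | rfl <;>
    norm_num [K0, Matrix.one_apply, one_ne_zero, of_z, vec2_zero, vec2_one]

lemma zmod2_ne_zero_iff (x : ZMod 2) : ¬ x = 0 ↔ x = 1 := by
  revert x; decide

set_option maxHeartbeats 2000000 in
lemma rho_diff (n : ℕ) :
    rho n 0 - rho n 1 = (1 / 2 ^ (2 * n - 1) : ℂ) • tens (fun _ : Fin n => K0) := by
  unfold rho
  rw [← smul_sub]
  congr 1
  have key : ∑ i : Fin n → ZMod 2,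
      chi (parity i) • ∑ j : Fin n → ZMod 2, tens (fun l => projQ (i l) (j l)) =
      (∑ i ∈ Finset.univ.filter (fun i : Fin n → ZMod 2 => parity i = 0),
        ∑ j : Fin n → ZMod 2, tens (fun l => projQ (i l) (j l))) -
      ∑ i ∈ Finset.univ.filter (fun i : Fin n → ZMod 2 => parity i = 1),
        ∑ j : Fin n → ZMod 2, tens (fun l => projQ (i l) (j l)) := by
    rw [← Finset.sum_filter_add_sum_filter_not Finset.univ
      (fun i : Fin n → ZMod 2 => parity i = 0)]
    have h1 : Finset.univ.filter (fun i : Fin n → ZMod 2 => ¬ parity i = 0) =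
        Finset.univ.filter (fun i : Fin n → ZMod 2 => parity i = 1) := by
      apply Finset.filter_congr
      intro i _
      simpa using zmod2_ne_zero_iff (parity i)
    rw [h1]
    have e0 : ∑ i ∈ Finset.univ.filter (fun i : Fin n → ZMod 2 => parity i = 0),
        chi (parity i) • ∑ j : Fin n → ZMod 2, tens (fun l => projQ (i l) (j l)) =
        ∑ i ∈ Finset.univ.filter (fun i : Fin n → ZMod 2 => parity i = 0),
        ∑ j : Fin n → ZMod 2, tens (fun l => projQ (i l) (j l)) :=
      Finset.sum_congr rfl fun i hi => by
        rw [(Finset.mem_filter.mp hi).2]; simp [chi]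
    have e1 : ∑ i ∈ Finset.univ.filter (fun i : Fin n → ZMod 2 => parity i = 1),
        chi (parity i) • ∑ j : Fin n → ZMod 2, tens (fun l => projQ (i l) (j l)) =
        -∑ i ∈ Finset.univ.filter (fun i : Fin n → ZMod 2 => parity i = 1),
        ∑ j : Fin n → ZMod 2, tens (fun l => projQ (i l) (j l)) := by
      rw [← Finset.sum_neg_distrib]
      exact Finset.sum_congr rfl fun i hi => by
        rw [(Finset.mem_filter.mp hi).2]; simp [chi, one_ne_zero]
    rw [e0, e1, sub_eq_add_neg]
  rw [← key]
  ext x y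
  simp only [Matrix.sum_apply, Matrix.smul_apply, smul_eq_mul, tens, of_apply]
  have step1 : ∀ i : Fin n → ZMod 2,
      chi (parity i) * ∑ j : Fin n → ZMod 2, ∏ l, projQ (i l) (j l) (x l) (y l) =
      ∏ l, (chi (i l) * ∑ w : ZMod 2, projQ (i l) w (x l) (y l)) := by
    intro i
    rw [chi_parity, sum_prod_eq (fun l w => projQ (i l) w (x l) (y l)),
      Finset.prod_mul_distrib]
  calc ∑ i : Fin n → ZMod 2,
        chi (parity i) * ∑ j : Fin n → ZMod 2, ∏ l, projQ (i l) (j l) (x l) (y l)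
      = ∑ i : Fin n → ZMod 2, ∏ l, (chi (i l) * ∑ w : ZMod 2, projQ (i l) w (x l) (y l)) :=
        Finset.sum_congr rfl fun i _ => step1 i
    _ = ∏ l, ∑ u : ZMod 2, (chi u * ∑ w : ZMod 2, projQ u w (x l) (y l)) :=
        sum_prod_eq (fun l u => chi u * ∑ w : ZMod 2, projQ u w (x l) (y l))
    _ = ∏ l, K0 (x l) (y l) := Finset.prod_congr rfl fun l _ => key_entry (x l) (y l)

/-- `D(ρ₀, ρ₁) ≤ (1/√2)^n`. -/
theorem traceDist_rho_le (n : ℕ) (hn : 1 ≤ n) :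
    (1 / 2) * traceNorm (rho n 0 - rho n 1) ≤ (1 / Real.sqrt 2) ^ n := by
  set c : ℝ := 1 / 2 ^ (2 * n - 1) with hc
  set K : Matrix (Fin n → ZMod 2) (Fin n → ZMod 2) ℂ := tens (fun _ : Fin n => K0) with hK
  have hcast : (1 / 2 ^ (2 * n - 1) : ℂ) = (c : ℂ) := by rw [hc]; push_cast; ring
  have hA : rho n 0 - rho n 1 = (c : ℂ) • K := by rw [rho_diff, hcast]
  set A : Matrix (Fin n → ZMod 2) (Fin n → ZMod 2) ℂ := (c : ℂ) • K with hAdef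
  have hKherm : Kᴴ = K := by
    rw [hK, tens_conjTranspose]
    simp [K0_herm]
  have hKK : K * K = ((2 : ℂ) ^ n) • 1 := by
    rw [hK, tens_mul]
    simp only [K0_sq]
    exact tens_smul_one 2
  have hAA : Aᴴ * A = ((c ^ 2 * 2 ^ n : ℝ) : ℂ) • 1 := by
    rw [hAdef, conjTranspose_smul, hKherm, smul_mul_smul_comm, hKK, smul_smul]
    congr 1
    push_cast
    rw [Complex.star_def, Complex.conj_ofReal]
    ring
  set r : ℝ := c * Real.sqrt 2 ^ n with hr
  have hrnn : 0 ≤ r := by positivity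
  have hr2 : r ^ 2 = c ^ 2 * 2 ^ n := by
    rw [hr, mul_pow, pow_right_comm, Real.sq_sqrt (by norm_num : (0:ℝ) ≤ 2)]
  have hsq : ((r : ℂ) • (1 : Matrix (Fin n → ZMod 2) (Fin n → ZMod 2) ℂ)) ^ 2 = Aᴴ * A := by
    rw [hAA, smul_pow, one_pow]
    congr 1
    rw [← Complex.ofReal_pow, hr2]
  have hpsd : PosSemidef ((r : ℂ) • (1 : Matrix (Fin n → ZMod 2) (Fin n → ZMod 2) ℂ)) := by
    have h : ((↑(Real.sqrt r) : ℂ) • (1 : Matrix (Fin n → ZMod 2) (Fin n → ZMod 2) ℂ))ᴴ *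
        ((↑(Real.sqrt r) : ℂ) • 1) = (r : ℂ) • 1 := by
      rw [conjTranspose_smul, conjTranspose_one, smul_mul_smul_comm, one_mul,
        Complex.star_def, Complex.conj_ofReal, ← Complex.ofReal_mul, Real.mul_self_sqrt hrnn]
    exact h ▸ posSemidef_conjTranspose_mul_self _
  have habs : matAbs A = (r : ℂ) • 1 := by
    have h1 : matAbs A = cfc Real.sqrt (Aᴴ * A) := by
      rw [(posSemidef_conjTranspose_mul_self A).1.cfc_eq]; rfl
    have h2 : ∀ t : ℝ, ((t : ℝ) : ℂ) • (1 : Matrix (Fin n → ZMod 2) (Fin n → ZMod 2) ℂ) =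
        algebraMap ℝ (Matrix (Fin n → ZMod 2) (Fin n → ZMod 2) ℂ) t := by
      intro t; rw [Algebra.algebraMap_eq_smul_one, Complex.coe_smul]
    rw [h1, hAA, ← hr2, h2, h2, cfc_algebraMap, Real.sqrt_sq hrnn]
  have htr : traceNorm (rho n 0 - rho n 1) = r * 2 ^ n := by
    rw [hA]
    unfold traceNorm
    rw [habs, Matrix.trace_smul, Matrix.trace_one]
    have hcard : (Fintype.card (Fin n → ZMod 2) : ℂ) = (2 : ℂ) ^ n := by
      simp [Fintype.card_fun, ZMod.card]
    rw [smul_eq_mul, hcard]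
    norm_cast
  rw [htr]
  apply le_of_eq
  have hs2 : Real.sqrt 2 ^ n * Real.sqrt 2 ^ n = 2 ^ n := by
    rw [← mul_pow, Real.mul_self_sqrt (by norm_num : (0:ℝ) ≤ 2)]
  have hp : (2:ℝ) ^ (2 * n - 1) * 2 = 2 ^ (2 * n) := by
    rw [← pow_succ]
    congr 1
    omega
  have hsp : (0:ℝ) < Real.sqrt 2 ^ n := by positivity
  have h2n : (2:ℝ) ^ (2*n) = 2^n * 2^n := by rw [two_mul, pow_add]
  rw [hr, hc, div_pow, one_pow]
  rw [eq_div_iff (ne_of_gt hsp)]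
  field_simp
  nlinarith [hs2, hp, h2n, hsp]
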